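/- Let F be the bipartite graph constructed from an r-regular Ramanujan graph U (r ≥ 35) on k vertices as follows: parts V₁, V₂ are copies of V(U), with edges x₁y₂ and x₂y₁ for every edge xy of U, and edges x₁x₂ for every vertex x. Then for every A ⊆ V₁ and B ⊆ V₂ with |A| = |B| = k/3, there is at least one edge of F between A and B. -/

import Mathlib

/-- The bipartite graph `F` built from `U`: parts are copies of `V(U)`, with edges
`x₁y₂`, `x₂y₁` for every edge `xy` of `U` and `x₁x₂` for every vertex `x`. -/
def bipDouble {V : Type*} (U : SimpleGraph V) : SimpleGraph (V ⊕ V) where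
  Adj a b :=
    match a, b with
    | Sum.inl x, Sum.inr y => U.Adj x y ∨ x = y
    | Sum.inr x, Sum.inl y => U.Adj y x ∨ y = x
    | _, _ => False
  symm := by
    constructor
    intro a b h
    cases a <;> cases b <;> exact h
  loopless := by
    constructor
    intro a h
    cases a <;> exact h

set_option maxHeartbeats 1000000 in
/-- If `U` is an `r`-regular Ramanujan graph (`r ≥ 35`) on `k` vertices, then in the
bipartite graph `F = bipDouble U`, any `A ⊆ V₁` and `B ⊆ V₂` with `|A| = |B| = k/3`
are joined by at least one edge of `F`. -/
theorem stmt4 {V : Type*} [Fintype V] [DecidableEq V] (U : SimpleGraph V)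
    [DecidableRel U.Adj] (r : ℕ) (hr : 35 ≤ r) (hreg : U.IsRegularOfDegree r)
    (hHerm : (U.adjMatrix ℝ).IsHermitian)
    (hRam : ∃ v₀ : V, hHerm.eigenvalues v₀ = r ∧
      ∀ v : V, v ≠ v₀ → |hHerm.eigenvalues v| ≤ 2 * Real.sqrt ((r : ℝ) - 1))
    (hk : 3 ∣ Fintype.card V)
    (A B : Finset V)
    (hA : A.card = Fintype.card V / 3) (hB : B.card = Fintype.card V / 3) :
    ∃ x ∈ A, ∃ y ∈ B, (bipDouble U).Adj (Sum.inl x) (Sum.inr y) := by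
  classical
  obtain ⟨v₀, hv₀, hgap⟩ := hRam
  set M : Matrix V V ℝ := U.adjMatrix ℝ with hMdef
  set μ : V → ℝ := hHerm.eigenvalues with hμdef
  set u : V → V → ℝ := fun i x => hHerm.eigenvectorBasis i x with hudef
  have hkpos : 0 < Fintype.card V := Fintype.card_pos_iff.mpr ⟨v₀⟩
  have hk3 : 3 ≤ Fintype.card V := Nat.le_of_dvd hkpos hk
  set K : ℝ := (Fintype.card V : ℝ) with hKdef
  have hKpos : (0:ℝ) < K := by rw [hKdef]; exact_mod_cast hkpos
  have hK3 : (3:ℝ) ≤ K := by rw [hKdef]; exact_mod_cast hk3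
  -- the common size of A and B, as a real number
  have hcast : ((Fintype.card V / 3 : ℕ) : ℝ) = K / 3 := by
    obtain ⟨m, hm⟩ := hk
    have h1 : Fintype.card V / 3 = m := by omega
    rw [h1, hKdef, hm]
    push_cast
    ring
  have hAcard : (A.card : ℝ) = K / 3 := by rw [hA, hcast]
  have hBcard : (B.card : ℝ) = K / 3 := by rw [hB, hcast]
  have hrR : (35:ℝ) ≤ (r:ℝ) := by exact_mod_cast hr
  -- spectral gap bound : lam < r/3
  set lam : ℝ := 2 * Real.sqrt ((r:ℝ) - 1) with hlamdef
  have hlam_nonneg : 0 ≤ lam := by positivity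
  have hlam_lt : lam < (r:ℝ) / 3 := by
    have h6 : (0:ℝ) < (r:ℝ) / 6 := by linarith
    have : Real.sqrt ((r:ℝ) - 1) < (r:ℝ) / 6 := by
      rw [show ((r:ℝ)/6) = ((r:ℝ)/6) from rfl]
      rw [Real.sqrt_lt' h6]
      nlinarith
    rw [hlamdef]; linarith
  have hlam_lt_r : lam < (r:ℝ) := by linarith
  -- orthogonality of rows of the eigenvector matrix
  have horth : ∀ x y : V, (∑ i : V, u i x * u i y) = if x = y then (1:ℝ) else 0 := by
    intro x y
    have h1 : (hHerm.eigenvectorUnitary : Matrix V V ℝ) *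
        star (hHerm.eigenvectorUnitary : Matrix V V ℝ) = 1 :=
      Matrix.mem_unitaryGroup_iff.mp hHerm.eigenvectorUnitary.2
    have := congrFun (congrFun h1 x) y
    simpa [Matrix.mul_apply, Matrix.one_apply, hudef] using this
  -- eigenvector equation, pointwise
  have heig : ∀ i x : V, (∑ y : V, M x y * u i y) = μ i * u i x := by
    intro i x
    have := congrFun (hHerm.mulVec_eigenvectorBasis i) x
    simpa [Matrix.mulVec, dotProduct, hudef, hMdef, hμdef] using this
  -- row and column sums are r
  have hMsymm : ∀ x y : V, M x y = M y x := by
    intro x y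
    simp [hMdef, SimpleGraph.adjMatrix_apply, SimpleGraph.adj_comm]
  have hrow : ∀ x : V, (∑ y : V, M x y) = (r:ℝ) := by
    intro x
    have h := hreg x
    rw [SimpleGraph.degree, SimpleGraph.neighborFinset_eq_filter] at h
    simp only [hMdef, SimpleGraph.adjMatrix_apply, Finset.sum_boole, h]
  have hcol : ∀ y : V, (∑ x : V, M x y) = (r:ℝ) := by
    intro y
    rw [show (∑ x : V, M x y) = ∑ x : V, M y x from Finset.sum_congr rfl
      (fun x _ => hMsymm x y)]
    exact hrow y
  -- row sums of the eigenvectors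
  set e : V → ℝ := fun i => ∑ x : V, u i x with hedef
  have he0 : ∀ i : V, i ≠ v₀ → e i = 0 := by
    intro i hi
    have h1 : μ i * e i = (r:ℝ) * e i := by
      have lhs : μ i * e i = ∑ x : V, (∑ y : V, M x y * u i y) := by
        simp only [heig, hedef, Finset.mul_sum]
      rw [lhs, Finset.sum_comm]
      have : ∀ y : V, (∑ x : V, M x y * u i y) = (r:ℝ) * u i y := by
        intro y
        rw [← Finset.sum_mul, hcol y]
      simp only [this, hedef, Finset.mul_sum]
    have hne : μ i ≠ (r:ℝ) := by
      have := hgap i hi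
      intro hcontra
      rw [hcontra] at this
      have : (r:ℝ) ≤ lam := le_trans (le_abs_self _) this
      linarith
    have : (μ i - (r:ℝ)) * e i = 0 := by linarith [h1]
    rcases mul_eq_zero.mp this with h | h
    · exact absurd (by linarith : μ i = (r:ℝ)) hne
    · exact h
  -- reconstruction of the constant function
  have hone : ∀ x : V, e v₀ * u v₀ x = 1 := by
    intro x
    have h1 : (∑ i : V, e i * u i x) = 1 := by
      have : (∑ i : V, e i * u i x) = ∑ y : V, (∑ i : V, u i x * u i y) := by
        simp only [hedef, Finset.sum_mul]
        rw [Finset.sum_comm]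
        exact Finset.sum_congr rfl fun y _ => Finset.sum_congr rfl fun i _ => mul_comm _ _
      rw [this]
      simp only [horth]
      simp
    have h2 : (∑ i : V, e i * u i x) = e v₀ * u v₀ x := by
      refine Finset.sum_eq_single v₀ (fun i _ hi => ?_) (fun h => absurd (Finset.mem_univ v₀) h)
      rw [he0 i hi, zero_mul]
    rw [← h2, h1]
  have hev0sq : e v₀ ^ 2 = K := by
    have h1 : (∑ i : V, e i ^ 2) = K := by
      have : (∑ i : V, e i ^ 2) = ∑ x : V, ∑ y : V, (∑ i : V, u i x * u i y) := by
        simp only [hedef, sq, Finset.sum_mul, Finset.mul_sum]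
        rw [Finset.sum_comm]
        refine Finset.sum_congr rfl fun x _ => ?_
        rw [Finset.sum_comm]
        exact Finset.sum_congr rfl fun y _ => Finset.sum_congr rfl fun i _ => mul_comm _ _
      rw [this]
      simp only [horth]
      simp [hKdef]
    have h2 : (∑ i : V, e i ^ 2) = e v₀ ^ 2 := by
      refine Finset.sum_eq_single v₀ (fun i _ hi => ?_) (fun h => absurd (Finset.mem_univ v₀) h)
      rw [he0 i hi]; ring
    rw [← h2, h1]
  have hev0ne : e v₀ ≠ 0 := by
    intro h
    rw [h] at hev0sq
    simp at hev0sq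
    linarith
  have huv0 : ∀ x : V, u v₀ x = 1 / e v₀ := by
    intro x
    field_simp
    have := hone x
    linarith [hone x]
  -- Fourier coefficients of the indicators of A and B
  set c : V → ℝ := fun i => ∑ x ∈ A, u i x with hcdef
  set d : V → ℝ := fun i => ∑ y ∈ B, u i y with hddef
  have hc0 : c v₀ = (A.card : ℝ) / e v₀ := by
    simp only [hcdef, huv0, Finset.sum_const, nsmul_eq_mul]
    ring
  have hd0 : d v₀ = (B.card : ℝ) / e v₀ := by
    simp only [hddef, huv0, Finset.sum_const, nsmul_eq_mul]
    ring
  have hParseval : ∀ (S : Finset V), (∑ i : V, (∑ x ∈ S, u i x) ^ 2) = (S.card : ℝ) := by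
    intro S
    have : (∑ i : V, (∑ x ∈ S, u i x) ^ 2)
        = ∑ x ∈ S, ∑ y ∈ S, (∑ i : V, u i x * u i y) := by
      simp only [sq, Finset.sum_mul, Finset.mul_sum]
      rw [Finset.sum_comm]
      refine Finset.sum_congr rfl fun x _ => ?_
      rw [Finset.sum_comm]
      exact Finset.sum_congr rfl fun y _ => Finset.sum_congr rfl fun i _ => mul_comm _ _
    rw [this]
    simp only [horth]
    rw [Finset.sum_congr rfl (fun x hx => Finset.sum_ite_eq S x (fun _ => (1:ℝ)))]
    simp
  have hsumc : (∑ i : V, c i ^ 2) = K / 3 := by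
    rw [hcdef]; rw [hParseval A, hAcard]
  have hsumd : (∑ i : V, d i ^ 2) = K / 3 := by
    rw [hddef]; rw [hParseval B, hBcard]
  -- the edge-count sum, expanded in the eigenbasis
  have hindB : ∀ y : V, (∑ i : V, d i * u i y) = if y ∈ B then (1:ℝ) else 0 := by
    intro y
    have : (∑ i : V, d i * u i y) = ∑ z ∈ B, (∑ i : V, u i y * u i z) := by
      simp only [hddef, Finset.sum_mul]
      rw [Finset.sum_comm]
      exact Finset.sum_congr rfl fun z _ => Finset.sum_congr rfl fun i _ => mul_comm _ _
    rw [this]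
    simp only [horth]
    exact Finset.sum_ite_eq B y (fun _ => (1:ℝ))
  have hS : (∑ x ∈ A, ∑ y ∈ B, M x y) = ∑ i : V, μ i * c i * d i := by
    have step1 : ∀ x : V, (∑ y ∈ B, M x y) = ∑ i : V, μ i * u i x * d i := by
      intro x
      have h1 : (∑ y : V, M x y * (if y ∈ B then (1:ℝ) else 0)) = ∑ y ∈ B, M x y := by
        simp only [mul_ite, mul_one, mul_zero]
        rw [Finset.sum_ite_mem, Finset.univ_inter]
      rw [← h1]
      have h2 : ∀ y : V, M x y * (if y ∈ B then (1:ℝ) else 0)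
          = ∑ i : V, d i * (M x y * u i y) := by
        intro y
        rw [← hindB y, Finset.mul_sum]
        exact Finset.sum_congr rfl fun i _ => by ring
      simp only [h2]
      rw [Finset.sum_comm]
      refine Finset.sum_congr rfl fun i _ => ?_
      rw [← Finset.mul_sum, heig]
      ring
    simp only [step1]
    rw [Finset.sum_comm]
    refine Finset.sum_congr rfl fun i _ => ?_
    rw [hcdef]
    simp only [Finset.sum_mul, Finset.mul_sum]
  -- head term
  have hK0 : K ≠ 0 := ne_of_gt hKpos
  have hcd : c v₀ * d v₀ = K / 9 := by
    have h2 : e v₀ * e v₀ = K := by rw [← sq]; exact hev0sq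
    rw [hc0, hd0, hAcard, hBcard, div_mul_div_comm, h2]
    field_simp
    ring
  have hhead : μ v₀ * c v₀ * d v₀ = (r:ℝ) * K / 9 := by
    rw [hv₀, mul_assoc, hcd]
    ring
  -- tail bound
  have htail : |∑ i ∈ Finset.univ.erase v₀, μ i * c i * d i| ≤ lam * (K / 3) := by
    calc |∑ i ∈ Finset.univ.erase v₀, μ i * c i * d i|
        ≤ ∑ i ∈ Finset.univ.erase v₀, |μ i * c i * d i| := Finset.abs_sum_le_sum_abs _ _
      _ ≤ ∑ i ∈ Finset.univ.erase v₀, lam * ((c i ^ 2 + d i ^ 2) / 2) := by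
          refine Finset.sum_le_sum fun i hi => ?_
          have hgi : |μ i| ≤ lam := hgap i (Finset.ne_of_mem_erase hi)
          have habs : |c i * d i| ≤ (c i ^ 2 + d i ^ 2) / 2 := by
            nlinarith [sq_nonneg (|c i| - |d i|), sq_abs (c i), sq_abs (d i),
              abs_mul (c i) (d i), abs_nonneg (c i), abs_nonneg (d i)]
          calc |μ i * c i * d i| = |μ i| * |c i * d i| := by
                rw [mul_assoc, abs_mul]
            _ ≤ lam * ((c i ^ 2 + d i ^ 2) / 2) := by
                apply mul_le_mul hgi habs (abs_nonneg _) hlam_nonneg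
      _ ≤ lam * (K / 3) := by
          rw [← Finset.mul_sum]
          refine mul_le_mul_of_nonneg_left ?_ hlam_nonneg
          have h1 : (∑ i ∈ Finset.univ.erase v₀, (c i ^ 2 + d i ^ 2) / 2)
              ≤ ∑ i : V, (c i ^ 2 + d i ^ 2) / 2 :=
            Finset.sum_le_sum_of_subset_of_nonneg (Finset.erase_subset _ _)
              (fun i _ _ => by positivity)
          have h2 : (∑ i : V, (c i ^ 2 + d i ^ 2) / 2) = K / 3 := by
            have h3 : (∑ i : V, (c i ^ 2 + d i ^ 2) / 2)
                = ((∑ i : V, c i ^ 2) + (∑ i : V, d i ^ 2)) / 2 := by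
              rw [← Finset.sum_div, Finset.sum_add_distrib]
            rw [h3, hsumc, hsumd]; ring
          linarith
  -- positivity of the edge count
  have hSpos : 0 < (∑ x ∈ A, ∑ y ∈ B, M x y) := by
    rw [hS]
    rw [← Finset.add_sum_erase _ _ (Finset.mem_univ v₀)]
    have hK9 : lam * (K / 3) < (r:ℝ) * K / 9 := by
      have : lam * (K / 3) < ((r:ℝ)/3) * (K / 3) := by
        apply mul_lt_mul_of_pos_right hlam_lt (by linarith)
      calc lam * (K / 3) < ((r:ℝ)/3) * (K / 3) := this
        _ = (r:ℝ) * K / 9 := by ring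
    have := neg_abs_le (∑ i ∈ Finset.univ.erase v₀, μ i * c i * d i)
    rw [hhead]
    linarith
  have hexists : ∃ x ∈ A, ∃ y ∈ B, U.Adj x y := by
    by_contra hcon
    push_neg at hcon
    have : (∑ x ∈ A, ∑ y ∈ B, M x y) = 0 := by
      refine Finset.sum_eq_zero fun x hx => Finset.sum_eq_zero fun y hy => ?_
      simp [hMdef, SimpleGraph.adjMatrix_apply, hcon x hx y hy]
    rw [this] at hSpos
    exact lt_irrefl 0 hSpos
  obtain ⟨x, hx, y, hy, hxy⟩ := hexists
  exact ⟨x, hx, y, hy, Or.inl hxy⟩
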